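/- Let g : ℕ × ℤ → ℤ satisfy g(n,i)=0 for i<0, the initial table g(0,0)=2, g(0,1)=2, g(1,1)=40, g(1,2)=24, g(2,1)=48, g(2,2)=720, g(2,3)=256 (and g(n,i)=0 for all other pairs with n≤2), and the recurrence g(n,i) = 20g(n-1,i-1) + 24g(n-2,i-1) - 64g(n-2,i-2) - 384g(n-3,i-3) for n≥3. Then for every n≥0: g(n,i)=0 whenever i > n+1 or i < ⌊(n+1)/2⌋, and g(n,i) > 0 whenever ⌊(n+1)/2⌋ ≤ i ≤ n+1. -/
import Mathlib


theorem stmt4 (g : ℕ × ℤ → ℤ)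
    (hneg : ∀ n : ℕ, ∀ i : ℤ, i < 0 → g (n, i) = 0)
    (h00 : g (0, 0) = 2) (h01 : g (0, 1) = 2)
    (h11 : g (1, 1) = 40) (h12 : g (1, 2) = 24)
    (h21 : g (2, 1) = 48) (h22 : g (2, 2) = 720) (h23 : g (2, 3) = 256)
    (hzero : ∀ n : ℕ, ∀ i : ℤ, n ≤ 2 →
      (n, i) ∉ ({(0, 0), (0, 1), (1, 1), (1, 2), (2, 1), (2, 2), (2, 3)} : Set (ℕ × ℤ)) →
      g (n, i) = 0)
    (hrec : ∀ n : ℕ, ∀ i : ℤ, g (n + 3, i) =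
      20 * g (n + 2, i - 1) + 24 * g (n + 1, i - 1) - 64 * g (n + 1, i - 2)
        - 384 * g (n, i - 3)) :
    ∀ n : ℕ, ∀ i : ℤ,
      ((i > (n : ℤ) + 1 ∨ i < ((n : ℤ) + 1) / 2) → g (n, i) = 0) ∧
      ((((n : ℤ) + 1) / 2 ≤ i ∧ i ≤ (n : ℤ) + 1) → 0 < g (n, i)) := by
  have h0z : ∀ i : ℤ, i ≠ 0 → i ≠ 1 → g (0, i) = 0 := by
    intro i a b
    rcases lt_or_ge i 0 with hn | hn
    · exact hneg 0 i hn
    · refine hzero 0 i (by norm_num) ?_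
      intro hm
      simp only [Set.mem_insert_iff, Set.mem_singleton_iff, Prod.mk.injEq] at hm
      omega
  have h1z : ∀ i : ℤ, i ≠ 1 → i ≠ 2 → g (1, i) = 0 := by
    intro i a b
    rcases lt_or_ge i 0 with hn | hn
    · exact hneg 1 i hn
    · refine hzero 1 i (by norm_num) ?_
      intro hm
      simp only [Set.mem_insert_iff, Set.mem_singleton_iff, Prod.mk.injEq] at hm
      omega
  have h2z : ∀ i : ℤ, i ≠ 1 → i ≠ 2 → i ≠ 3 → g (2, i) = 0 := by
    intro i a b c
    rcases lt_or_ge i 0 with hn | hn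
    · exact hneg 2 i hn
    · refine hzero 2 i (by norm_num) ?_
      intro hm
      simp only [Set.mem_insert_iff, Set.mem_singleton_iff, Prod.mk.injEq] at hm
      omega
  have key : ∀ n : ℕ,
      (∀ i : ℤ, (¬(((n : ℤ) + 1) / 2 ≤ i ∧ i ≤ (n : ℤ) + 1) → g (n, i) = 0) ∧
        ((((n : ℤ) + 1) / 2 ≤ i ∧ i ≤ (n : ℤ) + 1) → 0 < g (n, i))) ∧
      (∀ i : ℤ, (¬(((n : ℤ) + 2) / 2 ≤ i ∧ i ≤ (n : ℤ) + 2) → g (n + 1, i) = 0) ∧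
        ((((n : ℤ) + 2) / 2 ≤ i ∧ i ≤ (n : ℤ) + 2) → 0 < g (n + 1, i))) ∧
      (∀ i : ℤ, (¬(((n : ℤ) + 3) / 2 ≤ i ∧ i ≤ (n : ℤ) + 3) → g (n + 2, i) = 0) ∧
        ((((n : ℤ) + 3) / 2 ≤ i ∧ i ≤ (n : ℤ) + 3) → 0 < g (n + 2, i))) ∧
      (∀ i : ℤ, 8 * g (n + 1, i - 1) + 32 * g (n, i - 2) ≤ g (n + 2, i)) := by
    intro n
    induction n with
    | zero =>
      simp only [show (0 : ℕ) + 1 = 1 from rfl, show (0 : ℕ) + 2 = 2 from rfl,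
        Nat.cast_zero]
      refine ⟨?_, ?_, ?_, ?_⟩
      · intro i
        constructor
        · intro h; exact h0z i (by omega) (by omega)
        · intro h
          have h0 : 0 ≤ i := by omega
          have h1 : i ≤ 1 := by omega
          interval_cases i
          · rw [h00]; norm_num
          · rw [h01]; norm_num
      · intro i
        constructor
        · intro h; exact h1z i (by omega) (by omega)
        · intro h
          have h0 : 1 ≤ i := by omega
          have h1 : i ≤ 2 := by omega
          interval_cases i
          · rw [h11]; norm_num
          · rw [h12]; norm_num
      · intro i
        constructor
        · intro h; exact h2z i (by omega) (by omega) (by omega)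
        · intro h
          have h0 : 1 ≤ i := by omega
          have h1 : i ≤ 3 := by omega
          interval_cases i
          · rw [h21]; norm_num
          · rw [h22]; norm_num
          · rw [h23]; norm_num
      · intro i
        by_cases e1 : i = 1
        · subst e1
          rw [show (1:ℤ) - 1 = 0 from by norm_num, show (1:ℤ) - 2 = -1 from by norm_num,
            h1z 0 (by norm_num) (by norm_num), h0z (-1) (by norm_num) (by norm_num), h21]
          norm_num
        · by_cases e2 : i = 2
          · subst e2
            rw [show (2:ℤ) - 1 = 1 from by norm_num, show (2:ℤ) - 2 = 0 from by norm_num,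
              h11, h00, h22]
            norm_num
          · by_cases e3 : i = 3
            · subst e3
              rw [show (3:ℤ) - 1 = 2 from by norm_num, show (3:ℤ) - 2 = 1 from by norm_num,
                h12, h01, h23]
              norm_num
            · rw [h1z (i-1) (by omega) (by omega), h0z (i-2) (by omega) (by omega),
                h2z i e1 e2 e3]
              norm_num
    | succ n ih =>
      obtain ⟨s0, s1, s2, a0⟩ := ih
      have nn0 : ∀ j : ℤ, 0 ≤ g (n, j) := by
        intro j
        by_cases h : ((n : ℤ) + 1) / 2 ≤ j ∧ j ≤ (n : ℤ) + 1
        · exact ((s0 j).2 h).le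
        · rw [(s0 j).1 h]
      have nn1 : ∀ j : ℤ, 0 ≤ g (n + 1, j) := by
        intro j
        by_cases h : ((n : ℤ) + 2) / 2 ≤ j ∧ j ≤ (n : ℤ) + 2
        · exact ((s1 j).2 h).le
        · rw [(s1 j).1 h]
      have nn2 : ∀ j : ℤ, 0 ≤ g (n + 2, j) := by
        intro j
        by_cases h : ((n : ℤ) + 3) / 2 ≤ j ∧ j ≤ (n : ℤ) + 3
        · exact ((s2 j).2 h).le
        · rw [(s2 j).1 h]
      simp only [show n + 1 + 1 = n + 2 from rfl, show n + 1 + 2 = n + 3 from rfl,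
        Nat.cast_succ]
      refine ⟨?_, ?_, ?_, ?_⟩
      · intro i
        refine ⟨fun h => (s1 i).1 (by omega), fun h => (s1 i).2 (by omega)⟩
      · intro i
        refine ⟨fun h => (s2 i).1 (by omega), fun h => (s2 i).2 (by omega)⟩
      · intro i
        have r := hrec n i
        have a := a0 (i - 1)
        rw [show i - 1 - 1 = i - 2 from by ring, show i - 1 - 2 = i - 3 from by ring] at a
        constructor
        · intro h
          have z1 : g (n + 2, i - 1) = 0 := (s2 (i - 1)).1 (by omega)
          have z2 : g (n + 1, i - 1) = 0 := (s1 (i - 1)).1 (by omega)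
          have z3 : g (n + 1, i - 2) = 0 := (s1 (i - 2)).1 (by omega)
          have z4 : g (n, i - 3) = 0 := (s0 (i - 3)).1 (by omega)
          rw [z1, z2, z3, z4] at r
          linarith [r]
        · intro h
          by_cases hc : ((n : ℤ) + 3) / 2 ≤ i - 1
          · have p2 : 0 < g (n + 2, i - 1) := (s2 (i - 1)).2 ⟨hc, by omega⟩
            linarith [nn1 (i - 1), nn1 (i - 2), a, p2]
          · have p1 : 0 < g (n + 1, i - 1) := (s1 (i - 1)).2 ⟨by omega, by omega⟩
            linarith [nn2 (i - 1), nn1 (i - 2), a, p1]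
      · intro i
        have r := hrec n i
        have a := a0 (i - 1)
        rw [show i - 1 - 1 = i - 2 from by ring, show i - 1 - 2 = i - 3 from by ring] at a
        linarith [nn1 (i - 1), a]
  intro n i
  constructor
  · intro h; exact ((key n).1 i).1 (by omega)
  · intro h; exact ((key n).1 i).2 h
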